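/- Let p be a prime, m ≥ 1 a natural number, and r₁,…,r_m natural numbers with r₁ + ⋯ + r_m ≥ 1. Then the rational number (pr₁ + pr₂ + ⋯ + pr_m − 1)! / ((pr₁)!·(pr₂)!⋯(pr_m)!) − p⁻¹·(r₁ + r₂ + ⋯ + r_m − 1)! / (r₁!·r₂!⋯r_m!) has nonnegative p-adic valuation, i.e., lies in the localization ℤ_(p) of ℤ at p. -/

import Mathlib

open Finset Polynomial

-- cancel helper
lemma cancelPow (p c w k' X : ℕ) (hp : p.Prime) (hk' : ¬ p ∣ k')
    (h : p ^ (c + w) ∣ p ^ w * (k' * X)) : p ^ c ∣ X := by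
  have h0 : 0 < p ^ w := Nat.pow_pos hp.pos
  rw [pow_add, mul_comm (p ^ c)] at h
  have h2 : p ^ c ∣ k' * X := (Nat.mul_dvd_mul_iff_left h0).mp h
  have hc : Nat.Coprime (p ^ c) k' := (Nat.Prime.coprime_iff_not_dvd hp).mpr hk' |>.pow_left _
  exact hc.dvd_of_dvd_mul_left h2

-- Lemma A
lemma lemA (p : ℕ) (hp : p.Prime) (a N k : ℕ) (hk : 1 ≤ k) (hN : p ^ a ∣ N) :
    p ^ (a + 1) ∣ p ^ k * N.choose k := by
  rcases Nat.eq_zero_or_pos N with rfl | hN0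
  · simp [Nat.choose_eq_zero_of_lt hk]
  set v := k.factorization p with hv
  have hk0 : k ≠ 0 := by omega
  set k' := k / p ^ v with hk'
  have hkk : p ^ v * k' = k := Nat.ordProj_mul_ordCompl_eq_self k p
  have hpk' : ¬ p ∣ k' := Nat.not_dvd_ordCompl hp hk0
  have hvk : v < k := by
    have h1 : p ^ v ∣ k := Nat.ordProj_dvd k p
    have h2 : p ^ v ≤ k := Nat.le_of_dvd (by omega) h1
    have h3 : v < p ^ v := Nat.lt_pow_self hp.one_lt
    omega
  have key : k * (p ^ k * N.choose k) = p ^ k * (N * (N - 1).choose (k - 1)) := by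
    have h := Nat.add_one_mul_choose_eq (N - 1) (k - 1)
    have e1 : (N - 1).succ = N := Nat.succ_pred_eq_of_pos hN0
    have e2 : (k - 1).succ = k := Nat.succ_pred_eq_of_pos hk
    rw [Nat.succ_eq_add_one] at e1 e2
    rw [e1, e2] at h
    -- h : N * (N-1).choose (k-1) = N.choose k * k
    calc k * (p ^ k * N.choose k) = p ^ k * (N.choose k * k) := by ring
      _ = p ^ k * (N * (N - 1).choose (k - 1)) := by rw [← h]
  have hdvd : p ^ ((a + 1) + v) ∣ p ^ v * (k' * (p ^ k * N.choose k)) := by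
    rw [← mul_assoc, hkk, key]
    have h1 : p ^ ((a+1)+v) ∣ p ^ (v+1) * p ^ a := by
      rw [← pow_add]; exact pow_dvd_pow _ (by omega)
    refine h1.trans ?_
    exact mul_dvd_mul (pow_dvd_pow _ (by omega)) (hN.mul_right _)
  exact cancelPow p (a+1) v k' _ hp hpk' hdvd

lemma lemB (p : ℕ) (hp : p.Prime) (a N b : ℕ) (hN : p ^ a ∣ N) :
    ((p : ℤ)) ^ (a + 1) ∣ ((p * N).choose (p * b) : ℤ) - (N.choose b : ℤ) := by
  haveI := Fact.mk hp
  -- obtain E with (1+X)^p = 1 + X^p + C p * E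
  have hdvd : Polynomial.C (p : ℤ) ∣ ((1 + X) ^ p - (1 + X ^ p)) := by
    rw [Polynomial.C_dvd_iff_dvd_coeff]
    intro i
    have hmap : (((1 + X : Polynomial ℤ) ^ p - (1 + X ^ p)).map (Int.castRingHom (ZMod p))) = 0 := by
      simp only [Polynomial.map_sub, Polynomial.map_pow, Polynomial.map_add,
        Polynomial.map_one, Polynomial.map_X]
      rw [add_pow_char]
      ring
    have h2 := congrArg (fun f => Polynomial.coeff f i) hmap
    simp only [Polynomial.coeff_map, Polynomial.coeff_zero] at h2
    exact (ZMod.intCast_zmod_eq_zero_iff_dvd _ p).mp h2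
  obtain ⟨E, hE⟩ := hdvd
  have hE' : (1 + X : Polynomial ℤ) ^ p = (1 + X ^ p) + Polynomial.C (p:ℤ) * E := by
    linear_combination hE
  have hexp : ((1 : Polynomial ℤ) + X ^ p) = Polynomial.expand ℤ p (1 + X) := by
    simp [map_add, Polynomial.expand_X]
  have key : ((1 + X : Polynomial ℤ)) ^ (p * N)
      = ∑ k ∈ range (N + 1),
        (Polynomial.C (p:ℤ) * E) ^ k * (1 + X ^ p) ^ (N - k) * (N.choose k : Polynomial ℤ) := by
    rw [pow_mul, hE', add_comm ((1:Polynomial ℤ) + X ^ p), add_pow]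
  have hcoeff := congrArg (fun f : Polynomial ℤ => f.coeff (p * b)) key
  simp only [Polynomial.finset_sum_coeff] at hcoeff
  rw [Polynomial.coeff_one_add_X_pow] at hcoeff
  rw [Finset.sum_range_succ'] at hcoeff
  -- the k = 0 term
  have h0 : ((Polynomial.C (p:ℤ) * E) ^ 0 * (1 + X ^ p) ^ (N - 0) * (N.choose 0 : Polynomial ℤ)).coeff (p * b)
      = (N.choose b : ℤ) := by
    simp only [pow_zero, one_mul, Nat.sub_zero, Nat.choose_zero_right, Nat.cast_one, mul_one]
    rw [hexp, ← map_pow, Polynomial.coeff_expand hp.pos]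
    rw [if_pos (dvd_mul_right p b), Nat.mul_div_cancel_left b hp.pos]
    rw [Polynomial.coeff_one_add_X_pow]
  rw [h0] at hcoeff
  have : ((p * N).choose (p * b) : ℤ) - (N.choose b : ℤ)
      = ∑ k ∈ range N,
        ((Polynomial.C (p:ℤ) * E) ^ (k+1) * (1 + X ^ p) ^ (N - (k+1)) * (N.choose (k+1) : Polynomial ℤ)).coeff (p * b) := by
    rw [hcoeff]; ring
  rw [this]
  apply Finset.dvd_sum
  intro k hk
  have hterm : ((Polynomial.C (p:ℤ) * E) ^ (k+1) * (1 + X ^ p) ^ (N - (k+1)) * (N.choose (k+1) : Polynomial ℤ)).coeff (p * b)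
      = ((p:ℤ) ^ (k+1) * (N.choose (k+1) : ℤ)) * ((E ^ (k+1) * (1 + X ^ p) ^ (N - (k+1))).coeff (p * b)) := by
    have e : (Polynomial.C (p:ℤ) * E) ^ (k+1) * (1 + X ^ p) ^ (N - (k+1)) * (N.choose (k+1) : Polynomial ℤ)
        = Polynomial.C ((p:ℤ) ^ (k+1) * (N.choose (k+1) : ℤ)) * (E ^ (k+1) * (1 + X ^ p) ^ (N - (k+1))) := by
      rw [← Polynomial.C_eq_natCast, mul_pow, ← Polynomial.C_pow, Polynomial.C_mul]
      ring
    rw [e, Polynomial.coeff_C_mul]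
  rw [hterm]
  apply Dvd.dvd.mul_right
  have h2 := lemA p hp a N (k+1) (by omega) hN
  exact_mod_cast h2

lemma lemC (p : ℕ) (hp : p.Prime) {ι : Type*} [DecidableEq ι] (s : Finset ι) (f : ι → ℕ) :
    ∀ a : ℕ, p ^ a ∣ ∑ i ∈ s, f i →
    ((p : ℤ)) ^ (a + 1) ∣ (Nat.multinomial s (fun i => p * f i) : ℤ) - (Nat.multinomial s f : ℤ) := by
  induction s using Finset.induction with
  | empty => intro a _; simp
  | @insert x s hx ih =>
    intro a hN
    rw [Nat.multinomial_insert hx, Nat.multinomial_insert hx]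
    set r := f x with hr
    set N' := ∑ i ∈ s, f i with hN'
    have hsum : ∑ i ∈ insert x s, f i = r + N' := Finset.sum_insert hx
    rw [hsum] at hN
    have hpsum : p * r + ∑ i ∈ s, p * f i = p * (r + N') := by
      rw [← Finset.mul_sum]; ring
    set Mp := (Nat.multinomial s (fun i => p * f i) : ℤ)
    set M := (Nat.multinomial s f : ℤ)
    set C1 := (((p * (r + N')).choose (p * r)) : ℤ)
    set C0 := (((r + N').choose r) : ℤ)
    have hgoal : ((((p*r) + ∑ i ∈ s, p * f i).choose (p*r)) : ℤ) * Mp - C0 * M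
        = C1 * (Mp - M) + (C1 - C0) * M := by
      rw [hpsum]; ring
    push_cast
    rw [hgoal]
    apply dvd_add
    · -- C1 * (Mp - M)
      by_cases hra : p ^ a ∣ r
      · have : p ^ a ∣ N' := (Nat.dvd_add_right hra).mp hN
        exact Dvd.dvd.mul_left (ih a this) C1
      · have hr0 : r ≠ 0 := fun h0 => hra (h0 ▸ dvd_zero _)
        set v := r.factorization p with hv
        have hvr : p ^ v ∣ r := Nat.ordProj_dvd r p
        have hva : v < a := by
          by_contra hcon
          exact hra ((pow_dvd_pow p (by omega)).trans hvr)
        have hpv : p ^ v ∣ N' := by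
          have h1 : p ^ v ∣ r + N' := (pow_dvd_pow p (by omega)).trans hN
          exact (Nat.dvd_add_right hvr).mp h1
        have ih' := ih v hpv
        -- p ^ (a - v) ∣ C1
        have hC1 : (p:ℕ) ^ (a - v) ∣ (p * (r + N')).choose (p * r) := by
          set r' := r / p ^ v with hr'
          have hrr : p ^ v * r' = r := Nat.ordProj_mul_ordCompl_eq_self r p
          have hpr' : ¬ p ∣ r' := Nat.not_dvd_ordCompl hp hr0
          apply cancelPow p (a - v) (v + 1) r' _ hp hpr'
          have hid : (p * r) * ((p * (r + N')).choose (p * r))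
              = (p * (r + N')) * ((p * (r + N') - 1).choose (p * r - 1)) := by
            have h := Nat.add_one_mul_choose_eq (p * (r + N') - 1) (p * r - 1)
            have e1 : (p * (r + N') - 1).succ = p * (r + N') :=
              Nat.succ_pred_eq_of_pos (Nat.mul_pos hp.pos (by omega))
            have e2 : (p * r - 1).succ = p * r :=
              Nat.succ_pred_eq_of_pos (Nat.mul_pos hp.pos (by omega))
            rw [Nat.succ_eq_add_one] at e1 e2
            rw [e1, e2] at h
            rw [h]; ring
          have heq : p ^ (v + 1) * (r' * ((p * (r + N')).choose (p * r)))
              = (p * (r + N')) * ((p * (r + N') - 1).choose (p * r - 1)) := by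
            rw [← hid]
            rw [← hrr]
            ring
          rw [heq]
          have hd : p ^ ((a - v) + (v + 1)) ∣ p * (r + N') := by
            have hav : (a - v) + (v + 1) = a + 1 := by omega
            rw [hav, pow_succ, mul_comm]
            exact Nat.mul_dvd_mul_left p hN
          exact hd.mul_right _
        have hfin : ((p:ℤ)) ^ (a + 1) ∣ C1 * (Mp - M) := by
          have h1 : ((p:ℤ)) ^ (a - v) ∣ C1 := by
            have h2 := Int.natCast_dvd_natCast.mpr hC1
            push_cast at h2
            exact h2
          have : ((p:ℤ)) ^ (a + 1) = (p:ℤ) ^ (a - v) * (p:ℤ) ^ (v + 1) := by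
            rw [← pow_add]; congr 1; omega
          rw [this]
          exact mul_dvd_mul h1 ih'
        exact hfin
    · exact Dvd.dvd.mul_right (lemB p hp a (r + N') r hN) M

theorem factorial_ratio_difference_p_integral (p : ℕ) (hp : p.Prime)
    (m : ℕ) (hm : 1 ≤ m) (r : Fin m → ℕ) (hr : 1 ≤ ∑ i, r i) :
    ∃ u v : ℤ, ¬ (p : ℤ) ∣ v ∧
      (((p * ∑ i, r i - 1).factorial : ℚ) / ∏ i, ((p * r i).factorial : ℚ)
        - (1 / (p : ℚ)) * (((∑ i, r i) - 1).factorial : ℚ) / ∏ i, ((r i).factorial : ℚ))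
      = (u : ℚ) / (v : ℚ) := by
  classical
  set N := ∑ i, r i with hNdef
  have hN0 : N ≠ 0 := by omega
  set a := N.factorization p with ha
  set n := N / p ^ a with hn
  have hord : p ^ a * n = N := Nat.ordProj_mul_ordCompl_eq_self N p
  have hpn : ¬ p ∣ n := Nat.not_dvd_ordCompl hp hN0
  obtain ⟨u, hu⟩ := lemC p hp Finset.univ r a (Nat.ordProj_dvd N p)
  refine ⟨u, (n : ℤ), fun h => hpn (Int.natCast_dvd_natCast.mp h), ?_⟩
  set Mp := Nat.multinomial Finset.univ (fun i => p * r i) with hMp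
  set M := Nat.multinomial Finset.univ r with hM
  -- spec equalities
  have hspec1 : (∏ i, ((p * r i).factorial : ℚ)) * (Mp : ℚ) = ((p * N).factorial : ℚ) := by
    have h := Nat.multinomial_spec Finset.univ (fun i => p * r i)
    have hs : ∑ i, p * r i = p * N := by rw [hNdef, Finset.mul_sum]
    rw [hs] at h
    exact_mod_cast congrArg (fun x : ℕ => (x : ℚ)) h
  have hspec2 : (∏ i, ((r i).factorial : ℚ)) * (M : ℚ) = (N.factorial : ℚ) := by
    have h := Nat.multinomial_spec Finset.univ r
    exact_mod_cast congrArg (fun x : ℕ => (x : ℚ)) h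
  have hfac1 : ((p * N : ℕ) : ℚ) * ((p * N - 1).factorial : ℚ) = ((p * N).factorial : ℚ) := by
    exact_mod_cast congrArg (fun x : ℕ => (x : ℚ))
      (Nat.mul_factorial_pred (Nat.mul_pos hp.pos (Nat.pos_of_ne_zero hN0)).ne')
  have hfac2 : ((N : ℕ) : ℚ) * ((N - 1).factorial : ℚ) = (N.factorial : ℚ) := by
    exact_mod_cast congrArg (fun x : ℕ => (x : ℚ)) (Nat.mul_factorial_pred (by omega))
  have hP : (∏ i, ((p * r i).factorial : ℚ)) ≠ 0 := by
    apply Finset.prod_ne_zero_iff.mpr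
    intro i _
    exact_mod_cast (Nat.factorial_pos _).ne'
  have hQ : (∏ i, ((r i).factorial : ℚ)) ≠ 0 := by
    apply Finset.prod_ne_zero_iff.mpr
    intro i _
    exact_mod_cast (Nat.factorial_pos _).ne'
  have hp0 : (p : ℚ) ≠ 0 := by exact_mod_cast hp.pos.ne'
  have hN0' : (N : ℚ) ≠ 0 := by exact_mod_cast hN0
  have hn0 : (n : ℚ) ≠ 0 := by
    have : n ≠ 0 := by
      intro h0; rw [h0, mul_zero] at hord; exact hN0 hord.symm
    exact_mod_cast this
  have e1 : ((p * N - 1).factorial : ℚ) / ∏ i, ((p * r i).factorial : ℚ)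
      = (Mp : ℚ) / ((p : ℚ) * N) := by
    rw [div_eq_div_iff hP (by positivity)]
    calc ((p * N - 1).factorial : ℚ) * ((p:ℚ) * N)
        = ((p * N : ℕ) : ℚ) * ((p * N - 1).factorial : ℚ) := by push_cast; ring
      _ = ((p * N).factorial : ℚ) := hfac1
      _ = (∏ i, ((p * r i).factorial : ℚ)) * (Mp : ℚ) := hspec1.symm
      _ = (Mp : ℚ) * ∏ i, ((p * r i).factorial : ℚ) := by ring
  have e2 : (1 / (p : ℚ)) * ((N - 1).factorial : ℚ) / ∏ i, ((r i).factorial : ℚ)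
      = (M : ℚ) / ((p : ℚ) * N) := by
    rw [div_eq_div_iff hQ (by positivity)]
    calc (1 / (p : ℚ)) * ((N - 1).factorial : ℚ) * ((p:ℚ) * N)
        = ((N : ℕ) : ℚ) * ((N - 1).factorial : ℚ) := by field_simp
      _ = (N.factorial : ℚ) := hfac2
      _ = (∏ i, ((r i).factorial : ℚ)) * (M : ℚ) := hspec2.symm
      _ = (M : ℚ) * ∏ i, ((r i).factorial : ℚ) := by ring
  rw [e1, e2, div_sub_div_same]
  have hMdiff : (Mp : ℚ) - (M : ℚ) = (p : ℚ) ^ (a + 1) * (u : ℚ) := by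
    have := congrArg (fun x : ℤ => (x : ℚ)) hu
    push_cast at this ⊢
    linarith [this]
  rw [hMdiff]
  have hpN : ((p : ℚ) * N) = (p : ℚ) ^ (a + 1) * (n : ℚ) := by
    have : ((p ^ a * n : ℕ) : ℚ) = (N : ℚ) := by exact_mod_cast congrArg (fun x : ℕ => (x : ℚ)) hord
    push_cast at this
    rw [← this, pow_succ]
    ring
  rw [hpN, mul_div_mul_left _ _ (by positivity)]
  norm_cast
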